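/- Let d ≥ 1, m ≥ 1, T ∈ (0,∞), 1 < p ≤ 3, 0 < α ≤ 1, and E, M ≥ 0. Let v : (0,T) × ℝ^d → ℝ^m be measurable with ess sup_{t∈(0,T)} ‖v(t,·)‖_{L²(ℝ^d)} ≤ E and ‖v(·,·+z) − v‖_{L^p(0,T;L^{2p/(p−1)}(ℝ^d))} ≤ M|z|^α for every z ∈ ℝ^d \ {0}. Then for every z ∈ ℝ^d \ {0}, ‖v(·,·+z) − v‖_{L³(0,T;L³(ℝ^d))} ≤ (2E)^{1−p/3} M^{p/3} |z|^{pα/3}. -/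

import Mathlib

open MeasureTheory ENNReal

/-- The mixed norm `‖v‖_{L^p(0,T;L^q(ℝ^d))} = (∫_0^T ‖v(t,·)‖_{L^q}^p dt)^{1/p}`
(finite exponents). -/
noncomputable def mixedNorm (d m : ℕ) (T p q : ℝ)
    (v : ℝ → EuclideanSpace ℝ (Fin d) → EuclideanSpace ℝ (Fin m)) : ℝ≥0∞ :=
  (∫⁻ t in Set.Ioo 0 T, (eLpNorm (v t) (ENNReal.ofReal q) volume) ^ p) ^ (1 / p)

/-- Hölder interpolation at a fixed time: `‖f‖₃³ ≤ ‖f‖₂^{3-p} · (‖f‖_q)·^{...}` in lintegral form. -/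
lemma aux_holder {X : Type*} [MeasurableSpace X] (μ : Measure X)
    {F : Type*} [NormedAddCommGroup F] {f : X → F}
    (hf : AEMeasurable (fun x => (‖f x‖₊ : ℝ≥0∞)) μ)
    {p : ℝ} (hp1 : 1 < p) (hp3 : p < 3) :
    ∫⁻ x, (‖f x‖₊ : ℝ≥0∞) ^ (3:ℝ) ∂μ ≤
      (∫⁻ x, (‖f x‖₊ : ℝ≥0∞) ^ (2:ℝ) ∂μ) ^ ((3-p)/2) *
      (∫⁻ x, (‖f x‖₊ : ℝ≥0∞) ^ (2*p/(p-1)) ∂μ) ^ ((p-1)/2) := by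
  have h3p : (0:ℝ) < 3 - p := by linarith
  have hp1' : (0:ℝ) < p - 1 := by linarith
  have hconj : (2/(3-p)).HolderConjugate (2/(p-1)) := by
    rw [Real.holderConjugate_iff]
    constructor
    · rw [lt_div_iff₀ h3p]; linarith
    · field_simp
      ring
  have hmeas1 : AEMeasurable (fun x => (‖f x‖₊ : ℝ≥0∞) ^ (3-p)) μ := hf.pow_const _
  have hmeas2 : AEMeasurable (fun x => (‖f x‖₊ : ℝ≥0∞) ^ p) μ := hf.pow_const _
  calc ∫⁻ x, (‖f x‖₊ : ℝ≥0∞) ^ (3:ℝ) ∂μ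
      = ∫⁻ x, (‖f x‖₊ : ℝ≥0∞) ^ (3-p) * (‖f x‖₊ : ℝ≥0∞) ^ p ∂μ := by
        refine lintegral_congr fun x => ?_
        rw [← ENNReal.rpow_add_of_nonneg _ _ (by linarith) (by linarith)]
        norm_num
    _ ≤ (∫⁻ x, ((‖f x‖₊ : ℝ≥0∞) ^ (3-p)) ^ (2/(3-p)) ∂μ) ^ (1/(2/(3-p))) *
        (∫⁻ x, ((‖f x‖₊ : ℝ≥0∞) ^ p) ^ (2/(p-1)) ∂μ) ^ (1/(2/(p-1))) :=
        ENNReal.lintegral_mul_le_Lp_mul_Lq μ hconj hmeas1 hmeas2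
    _ = (∫⁻ x, (‖f x‖₊ : ℝ≥0∞) ^ (2:ℝ) ∂μ) ^ ((3-p)/2) *
        (∫⁻ x, (‖f x‖₊ : ℝ≥0∞) ^ (2*p/(p-1)) ∂μ) ^ ((p-1)/2) := by
        rw [one_div_div, one_div_div]
        congr 1
        · congr 1; refine lintegral_congr fun x => ?_
          rw [← ENNReal.rpow_mul]
          congr 1; field_simp
        · congr 1; refine lintegral_congr fun x => ?_
          rw [← ENNReal.rpow_mul]
          congr 1; field_simp

/-- **Quantitative space–time interpolation (after (3.2)).**
For `d, m ≥ 1`, `T ∈ (0,∞)`, `1 < p ≤ 3`, `0 < α ≤ 1`, `E, M ≥ 0`, if a measurable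
`v : (0,T) × ℝ^d → ℝ^m` satisfies `ess sup_{t∈(0,T)} ‖v(t,·)‖_{L²} ≤ E` and
`‖v(·,·+z) − v‖_{L^p(0,T;L^{2p/(p−1)})} ≤ M|z|^α` for all `z ≠ 0`, then for all `z ≠ 0`,
`‖v(·,·+z) − v‖_{L³(0,T;L³)} ≤ (2E)^{1−p/3} M^{p/3} |z|^{pα/3}`. -/
theorem stmt17 (d m : ℕ) (hd : 1 ≤ d) (hm : 1 ≤ m) (T p α E M : ℝ)
    (hT : 0 < T) (hp1 : 1 < p) (hp3 : p ≤ 3) (hα0 : 0 < α) (hα1 : α ≤ 1)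
    (hE : 0 ≤ E) (hM : 0 ≤ M)
    (v : ℝ → EuclideanSpace ℝ (Fin d) → EuclideanSpace ℝ (Fin m))
    (hmeas : Measurable (Function.uncurry v))
    (hEbound : essSup (fun t => eLpNorm (v t) 2 volume)
        (volume.restrict (Set.Ioo 0 T)) ≤ ENNReal.ofReal E)
    (hbesov : ∀ z : EuclideanSpace ℝ (Fin d), z ≠ 0 →
      mixedNorm d m T p (2 * p / (p - 1)) (fun t x => v t (x + z) - v t x) ≤
        ENNReal.ofReal (M * ‖z‖ ^ α)) :
    ∀ z : EuclideanSpace ℝ (Fin d), z ≠ 0 →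
      mixedNorm d m T 3 3 (fun t x => v t (x + z) - v t x) ≤
        ENNReal.ofReal (2 * E) ^ (1 - p / 3) * ENNReal.ofReal M ^ (p / 3) *
          ENNReal.ofReal (‖z‖ ^ (p * α / 3)) := by
  intro z hz
  have hp0 : (0:ℝ) < p := by linarith
  set q : ℝ := 2 * p / (p - 1) with hq
  have hp1' : (0:ℝ) < p - 1 := by linarith
  have hq0 : (0:ℝ) < q := by positivity
  set w : ℝ → EuclideanSpace ℝ (Fin d) → EuclideanSpace ℝ (Fin m) :=
    fun t x => v t (x + z) - v t x with hw
  have hvt : ∀ t, Measurable (v t) := fun t => hmeas.comp measurable_prodMk_left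
  have hwt : ∀ t, Measurable (w t) := fun t =>
    ((hvt t).comp (measurable_add_const z)).sub (hvt t)
  -- translate has same L² norm
  have htrans : ∀ t, eLpNorm (fun x => v t (x + z)) 2 volume = eLpNorm (v t) 2 volume :=
    fun t => eLpNorm_comp_measurePreserving ((hvt t).aestronglyMeasurable)
      (measurePreserving_add_right volume z)
  -- a.e. L² bound on w
  have hA : ∀ᵐ t ∂(volume.restrict (Set.Ioo 0 T)),
      eLpNorm (w t) 2 volume ≤ ENNReal.ofReal (2 * E) := by
    filter_upwards [ENNReal.ae_le_essSup (fun t => eLpNorm (v t) 2 volume)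
      (μ := volume.restrict (Set.Ioo 0 T))] with t ht
    have h1 : eLpNorm (v t) 2 volume ≤ ENNReal.ofReal E := ht.trans hEbound
    have h2 : eLpNorm (w t) 2 volume ≤
        eLpNorm (fun x => v t (x + z)) 2 volume + eLpNorm (v t) 2 volume :=
      eLpNorm_sub_le (((hvt t).comp (measurable_add_const z)).aestronglyMeasurable)
        ((hvt t).aestronglyMeasurable) one_le_two
    calc eLpNorm (w t) 2 volume ≤ _ + _ := h2
      _ = eLpNorm (v t) 2 volume + eLpNorm (v t) 2 volume := by rw [htrans t]
      _ ≤ ENNReal.ofReal E + ENNReal.ofReal E := add_le_add h1 h1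
      _ = ENNReal.ofReal (2 * E) := by rw [← ENNReal.ofReal_add hE hE]; ring_nf
  -- identity: ∫‖w t‖² = (eLpNorm₂)²
  have h2id : ∀ t, (∫⁻ x, (‖w t x‖₊ : ℝ≥0∞) ^ (2:ℝ)) = (eLpNorm (w t) 2 volume) ^ (2:ℝ) := by
    intro t
    rw [eLpNorm_eq_lintegral_rpow_enorm_toReal (by simp) (by simp), ← ENNReal.rpow_mul]
    norm_num
    rfl
  -- identity: (∫‖w t‖^q)^((p-1)/2) = (eLpNorm_q)^p
  have hqid : ∀ t, (∫⁻ x, (‖w t x‖₊ : ℝ≥0∞) ^ q) ^ ((p-1)/2)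
      = (eLpNorm (w t) (ENNReal.ofReal q) volume) ^ p := by
    intro t
    rw [eLpNorm_eq_lintegral_rpow_enorm_toReal ((ENNReal.ofReal_pos.mpr hq0).ne') (by simp),
      ENNReal.toReal_ofReal hq0.le, ← ENNReal.rpow_mul]
    congr 1
    rw [hq]
    field_simp
  -- identity: eLpNorm₃ ^ 3 = ∫‖w t‖³
  have h3id : ∀ t, (eLpNorm (w t) (ENNReal.ofReal 3) volume) ^ (3:ℝ)
      = ∫⁻ x, (‖w t x‖₊ : ℝ≥0∞) ^ (3:ℝ) := by
    intro t
    rw [eLpNorm_eq_lintegral_rpow_enorm_toReal (by simp) (by simp), ← ENNReal.rpow_mul]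
    norm_num
    rfl
  -- the Besov bound in integrated form
  have hbes : ∫⁻ t in Set.Ioo 0 T, (eLpNorm (w t) (ENNReal.ofReal q) volume) ^ p
      ≤ (ENNReal.ofReal M * ENNReal.ofReal (‖z‖ ^ α)) ^ p := by
    have h := hbesov z hz
    rw [mixedNorm] at h
    have := ENNReal.rpow_le_rpow h hp0.le
    rwa [← ENNReal.rpow_mul, one_div, inv_mul_cancel₀ hp0.ne', ENNReal.rpow_one,
      ENNReal.ofReal_mul hM] at this
  rcases eq_or_lt_of_le hp3 with hpe | hplt
  · -- p = 3
    subst hpe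
    have hq3 : q = 3 := by rw [hq]; norm_num
    have h := hbesov z hz
    rw [mixedNorm] at h ⊢
    rw [hq3] at h
    calc (∫⁻ t in Set.Ioo 0 T, eLpNorm (w t) (ENNReal.ofReal 3) volume ^ (3:ℝ)) ^ (1/(3:ℝ))
        ≤ ENNReal.ofReal (M * ‖z‖ ^ α) := h
      _ = ENNReal.ofReal (2 * E) ^ (1 - (3:ℝ) / 3) * ENNReal.ofReal M ^ ((3:ℝ) / 3) *
          ENNReal.ofReal (‖z‖ ^ ((3:ℝ) * α / 3)) := by
          rw [ENNReal.ofReal_mul hM]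
          norm_num
  · -- p < 3
    have h3p : (0:ℝ) ≤ 3 - p := by linarith
    -- pointwise-in-t bound, a.e.
    have hptw : ∀ᵐ t ∂(volume.restrict (Set.Ioo 0 T)),
        (∫⁻ x, (‖w t x‖₊ : ℝ≥0∞) ^ (3:ℝ)) ≤
          ENNReal.ofReal (2 * E) ^ (3 - p) *
            (eLpNorm (w t) (ENNReal.ofReal q) volume) ^ p := by
      filter_upwards [hA] with t ht
      calc (∫⁻ x, (‖w t x‖₊ : ℝ≥0∞) ^ (3:ℝ))
          ≤ (∫⁻ x, (‖w t x‖₊ : ℝ≥0∞) ^ (2:ℝ)) ^ ((3-p)/2) *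
            (∫⁻ x, (‖w t x‖₊ : ℝ≥0∞) ^ q) ^ ((p-1)/2) :=
            aux_holder volume ((hwt t).nnnorm.coe_nnreal_ennreal.aemeasurable) hp1 hplt
        _ = ((eLpNorm (w t) 2 volume) ^ (2:ℝ)) ^ ((3-p)/2) *
            (eLpNorm (w t) (ENNReal.ofReal q) volume) ^ p := by rw [h2id t, hqid t]
        _ ≤ ENNReal.ofReal (2 * E) ^ (3 - p) *
            (eLpNorm (w t) (ENNReal.ofReal q) volume) ^ p := by
            gcongr
            rw [← ENNReal.rpow_mul]
            have : (2:ℝ) * ((3-p)/2) = 3 - p := by ring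
            rw [this]
            exact ENNReal.rpow_le_rpow ht h3p
    -- integrate
    have hint : (∫⁻ t in Set.Ioo 0 T, eLpNorm (w t) (ENNReal.ofReal 3) volume ^ (3:ℝ)) ≤
        ENNReal.ofReal (2 * E) ^ (3 - p) *
          ((ENNReal.ofReal M * ENNReal.ofReal (‖z‖ ^ α)) ^ p) := by
      calc (∫⁻ t in Set.Ioo 0 T, eLpNorm (w t) (ENNReal.ofReal 3) volume ^ (3:ℝ))
          = ∫⁻ t in Set.Ioo 0 T, ∫⁻ x, (‖w t x‖₊ : ℝ≥0∞) ^ (3:ℝ) :=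
            lintegral_congr fun t => h3id t
        _ ≤ ∫⁻ t in Set.Ioo 0 T, ENNReal.ofReal (2 * E) ^ (3 - p) *
              (eLpNorm (w t) (ENNReal.ofReal q) volume) ^ p := lintegral_mono_ae hptw
        _ = ENNReal.ofReal (2 * E) ^ (3 - p) *
              ∫⁻ t in Set.Ioo 0 T, (eLpNorm (w t) (ENNReal.ofReal q) volume) ^ p :=
            lintegral_const_mul' _ _ (by
              exact ENNReal.rpow_ne_top_of_nonneg h3p ENNReal.ofReal_ne_top)
        _ ≤ _ := by gcongr
    -- conclude
    rw [mixedNorm]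
    calc (∫⁻ t in Set.Ioo 0 T, eLpNorm (w t) (ENNReal.ofReal 3) volume ^ (3:ℝ)) ^ (1/(3:ℝ))
        ≤ (ENNReal.ofReal (2 * E) ^ (3 - p) *
            ((ENNReal.ofReal M * ENNReal.ofReal (‖z‖ ^ α)) ^ p)) ^ (1/(3:ℝ)) :=
          ENNReal.rpow_le_rpow hint (by norm_num)
      _ = ENNReal.ofReal (2 * E) ^ (1 - p / 3) * ENNReal.ofReal M ^ (p / 3) *
          ENNReal.ofReal (‖z‖ ^ (p * α / 3)) := by
          rw [ENNReal.mul_rpow_of_nonneg _ _ hp0.le, ← mul_assoc,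
            ENNReal.mul_rpow_of_nonneg _ _ (by norm_num : (0:ℝ) ≤ 1/3),
            ENNReal.mul_rpow_of_nonneg _ _ (by norm_num : (0:ℝ) ≤ 1/3),
            ← ENNReal.rpow_mul, ← ENNReal.rpow_mul, ← ENNReal.rpow_mul]
          congr 1
          · congr 1
            · congr 1; ring
            · congr 1; ring
          · rw [ENNReal.ofReal_rpow_of_nonneg (by positivity) (by positivity),
              ← Real.rpow_mul (norm_nonneg z)]
            congr 1
            ring
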